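/- Suppose $\omega \subseteq X \subseteq \beta\omega$, $p$ is a free ultrafilter on $\omega$, $(C_n)_{n\in\omega}$ is a sequence of pairwise disjoint finite nonempty subsets of $\omega$, $\mathcal{G} = \{g \in \omega^\omega : \forall n,\ g(n) \in C_n\}$, and $Z_p = \{p\text{-}\lim g : g \in \mathcal{G}\}$. If the sequence $(C_n)$ has a $p$-limit $F$ in the Vietoris hyperspace $\mathrm{CL}(X)$, then $Z_p \subseteq F$; in particular $Z_p \subseteq X$. -/

import Mathlib

open Filter Topology

/-- The Vietoris hyperspace `CL(X)` of nonempty closed subsets of `X`. -/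
def CL (X : Type*) [TopologicalSpace X] : Type _ := {F : Set X // F.Nonempty ∧ IsClosed F}

/-- The Vietoris topology. -/
instance CL.instTopologicalSpace (X : Type*) [TopologicalSpace X] : TopologicalSpace (CL X) :=
  TopologicalSpace.generateFrom
    {S | ∃ A : Set X, IsOpen A ∧
      (S = {F : CL X | F.1 ⊆ A} ∨ S = {F : CL X | (F.1 ∩ A).Nonempty})}

/-- With the setup of Statement 11, if `(C n)` has a `p`-limit `F` in the
Vietoris hyperspace `CL(X)`, then `Z_p ⊆ F`; in particular `Z_p ⊆ X`. -/
theorem stmt12 (X : Set (Ultrafilter ℕ)) (hX : ∀ n : ℕ, (pure n : Ultrafilter ℕ) ∈ X)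
    (p : Ultrafilter ℕ) (hp : ∀ a, p ≠ pure a)
    (C : ℕ → Set ℕ) (hfin : ∀ n, (C n).Finite) (hne : ∀ n, (C n).Nonempty)
    (hdisj : ∀ m n, m ≠ n → Disjoint (C m) (C n))
    (Zp : Set (Ultrafilter ℕ))
    (hZp : Zp = {x | ∃ g : ℕ → ℕ, (∀ n, g n ∈ C n) ∧
      Tendsto (fun n => (pure (g n) : Ultrafilter ℕ)) ↑p (𝓝 x)})
    (F : CL ↥X)
    (K : ℕ → CL ↥X)
    (hK : ∀ n, (K n).1 = {x : ↥X | ∃ k ∈ C n, (x : Ultrafilter ℕ) = pure k})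
    (hlim : ∀ U : Set (CL ↥X), IsOpen U → F ∈ U → {n | K n ∈ U} ∈ p) :
    Zp ⊆ Subtype.val '' F.1 ∧ Zp ⊆ X := by
  have main : Zp ⊆ Subtype.val '' F.1 := by
    rintro x hx
    rw [hZp] at hx
    obtain ⟨g, hg, hten⟩ := hx
    -- from the tendsto hypothesis: x = Ultrafilter.map g p
    have hxS : ∀ S : Set ℕ, S ∈ x → {n | g n ∈ S} ∈ p := by
      intro S hS
      have hW : IsOpen {u : Ultrafilter ℕ | S ∈ u} := ultrafilter_isOpen_basic S
      have h1 : {u : Ultrafilter ℕ | S ∈ u} ∈ 𝓝 x := hW.mem_nhds hS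
      have h2 := hten h1
      simpa [Ultrafilter.mem_pure] using h2
    have hq : x = Ultrafilter.map g p := by
      symm
      rw [← Ultrafilter.coe_le_coe]
      rw [Filter.le_def]
      intro S hS
      have := hxS S hS
      simpa [Ultrafilter.mem_coe, Ultrafilter.mem_map] using (show g ⁻¹' S ∈ p from this)
    -- hit lemma
    have hit : ∀ S : Set ℕ, (∃ y ∈ F.1, S ∈ (y : Ultrafilter ℕ)) →
        {n | (C n ∩ S).Nonempty} ∈ p := by
      rintro S ⟨y, hyF, hyS⟩
      set A : Set ↥X := {z : ↥X | S ∈ (z : Ultrafilter ℕ)} with hAdef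
      have hA : IsOpen A := (ultrafilter_isOpen_basic S).preimage continuous_subtype_val
      have hU : IsOpen {G : CL ↥X | (G.1 ∩ A).Nonempty} :=
        TopologicalSpace.isOpen_generateFrom_of_mem ⟨A, hA, Or.inr rfl⟩
      have hFU : F ∈ {G : CL ↥X | (G.1 ∩ A).Nonempty} := ⟨y, hyF, hyS⟩
      have hm := hlim _ hU hFU
      refine p.mem_of_superset hm ?_
      rintro n ⟨z, hz1, hz2⟩
      rw [hK] at hz1
      obtain ⟨k, hk, hzk⟩ := hz1
      have : k ∈ S := by
        have : S ∈ (z : Ultrafilter ℕ) := hz2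
        rw [hzk] at this
        simpa [Ultrafilter.mem_pure] using this
      exact ⟨k, hk, this⟩
    -- there is a point of F containing range g
    have hex : ∃ y ∈ F.1, Set.range g ∈ (y : Ultrafilter ℕ) := by
      by_contra h
      push_neg at h
      set A : Set ↥X := {z : ↥X | Set.range g ∈ (z : Ultrafilter ℕ)}ᶜ with hAdef
      have hA : IsOpen A :=
        ((ultrafilter_isClosed_basic (Set.range g)).preimage
          continuous_subtype_val).isOpen_compl
      have hU : IsOpen {G : CL ↥X | G.1 ⊆ A} :=
        TopologicalSpace.isOpen_generateFrom_of_mem ⟨A, hA, Or.inl rfl⟩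
      have hFU : F ∈ {G : CL ↥X | G.1 ⊆ A} := by
        intro z hz
        exact h z hz
      have hm := hlim _ hU hFU
      obtain ⟨n, hn⟩ := p.nonempty_of_mem hm
      have hmem : (⟨pure (g n), hX (g n)⟩ : ↥X) ∈ (K n).1 := by
        rw [hK]; exact ⟨g n, hg n, rfl⟩
      have := hn hmem
      exact this (by simpa [Ultrafilter.mem_pure] using Set.mem_range_self n)
    obtain ⟨y, hyF, hyr⟩ := hex
    -- show y.val = Ultrafilter.map g p
    have hyx : (y : Ultrafilter ℕ) = x := by
      rw [hq]
      symm
      rw [← Ultrafilter.coe_le_coe, Filter.le_def]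
      intro T hT
      have hT' : T ∈ (y : Ultrafilter ℕ) := hT
      have hint : T ∩ Set.range g ∈ (y : Ultrafilter ℕ) := inter_mem hT' hyr
      have h1 := hit (T ∩ Set.range g) ⟨y, hyF, hint⟩
      have hsub : {n | (C n ∩ (T ∩ Set.range g)).Nonempty} ⊆ {n | g n ∈ T} := by
        intro n hn
        simp only [Set.mem_setOf_eq] at hn ⊢
        obtain ⟨k, hkC, hkT, m, hm⟩ := hn
        have hmn : m = n := by
          by_contra hne'
          exact (hdisj m n hne').ne_of_mem (hg m) hkC hm
        subst hmn
        rw [hm]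
        exact hkT
      have h2 : {n | g n ∈ T} ∈ p := p.mem_of_superset h1 hsub
      simpa [Ultrafilter.mem_coe, Ultrafilter.mem_map] using (show g ⁻¹' T ∈ p from h2)
    exact ⟨y, hyF, hyx⟩
  refine ⟨main, fun z hz => ?_⟩
  obtain ⟨y, _, rfl⟩ := main hz
  exact y.2
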